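/- arXiv:1605.01799 — 4 statements merged into one kernel-verified Lean document; each statement's English description precedes it below -/
import Mathlib

section
/- Let J(x) = (1/2)(Σᵢ xᵢ²/aᵢ² - 1) with all aᵢ > 0, and define φ(x,t) = -min_{v∈ℝⁿ} { J*(v) + t‖v‖₁ - ⟨x,v⟩ }. Then for all x ∈ ℝⁿ and t > 0, φ(x,t) = -1/2 + Σ_{i : |xᵢ| > t} (1/2)((|xᵢ| - t)/aᵢ)². -/
open scoped RealInnerProductSpace

/-- Per-coordinate lower bound. -/
lemma percoord_lb (b t c w : ℝ) (hb : 0 < b) (ht : 0 < t) :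
    (if t < |c| then -((1/2) * ((|c| - t)/b)^2) else 0) ≤
      (1/2)*b^2*w^2 + t*|w| - c*w := by
  have h1 : c * w ≤ |c| * |w| := (le_abs_self _).trans (abs_mul c w).le
  have h2 : (0:ℝ) ≤ |w| := abs_nonneg w
  have h3 : |w|^2 = w^2 := sq_abs w
  split_ifs with h
  · set s := (|c| - t)/b with hsdef
    have hcb : |c| = b*s + t := by rw [hsdef]; field_simp; ring
    have key : b^2*|w|^2 - 2*(b*s)*|w| + s^2 ≥ 0 := by nlinarith [sq_nonneg (b*|w| - s)]
    have h1' : c*w ≤ (b*s+t)*|w| := by rw [← hcb]; exact h1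
    nlinarith [key, h1', h3]
  · push_neg at h
    nlinarith [sq_nonneg w]

/-- Per-coordinate minimum attained. -/
lemma percoord_eq (b t c w : ℝ) (hb : 0 < b) (ht : 0 < t)
    (hw : w = if t < |c| then (if 0 ≤ c then 1 else -1) * (|c| - t) / b^2 else 0) :
    (1/2)*b^2*w^2 + t*|w| - c*w =
      (if t < |c| then -((1/2) * ((|c| - t)/b)^2) else 0) := by
  have hb2 : (0:ℝ) < b^2 := by positivity
  have hbne : b ≠ 0 := hb.ne'
  split_ifs at hw ⊢ with h hc
  · have hct : (0:ℝ) ≤ |c| - t := le_of_lt (by linarith)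
    have hcc : |c| = c := abs_of_nonneg hc
    rw [hcc] at hw hct
    subst hw
    have habs : |1 * (c - t) / b^2| = (c - t)/b^2 := by
      rw [abs_of_nonneg]; · ring_nf
      positivity
    rw [habs, hcc]
    field_simp
    ring
  · have hct : (0:ℝ) ≤ |c| - t := le_of_lt (by linarith)
    have hcc : |c| = -c := abs_of_neg (lt_of_not_ge hc)
    rw [hcc] at hw hct
    subst hw
    have habs : |-1 * (-c - t) / b^2| = (-c - t)/b^2 := by
      rw [abs_of_nonpos]; · ring
      apply div_nonpos_of_nonpos_of_nonneg
      · nlinarith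
      · positivity
    rw [habs, hcc]
    field_simp
    ring
  · subst hw; simp

open Finset in
/-- For `J(x) = (1/2)(∑ xᵢ²/aᵢ² - 1)` and `φ(x,t) = -min_v { J*(v) + t‖v‖₁ - ⟨x,v⟩ }`,
we have `φ(x,t) = -1/2 + ∑_{|xᵢ| > t} (1/2)((|xᵢ| - t)/aᵢ)²`. -/
theorem hopf_formula_ellipsoid_l1 (n : ℕ) (a : Fin n → ℝ) (ha : ∀ i, 0 < a i)
    (J : EuclideanSpace ℝ (Fin n) → ℝ)
    (hJ : ∀ x, J x = (1/2) * ((∑ i, (x i)^2 / (a i)^2) - 1))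
    (Jstar : EuclideanSpace ℝ (Fin n) → ℝ)
    (hJstar : ∀ v, IsLUB (Set.range fun x : EuclideanSpace ℝ (Fin n) => ⟪v, x⟫ - J x) (Jstar v))
    (x : EuclideanSpace ℝ (Fin n)) (t : ℝ) (ht : 0 < t) :
    IsLeast (Set.range fun v : EuclideanSpace ℝ (Fin n) =>
        Jstar v + t * (∑ i, |v i|) - ⟪x, v⟫)
      (-(-(1/2) + ∑ i ∈ Finset.univ.filter (fun i => t < |x i|),
          (1/2) * ((|x i| - t) / a i)^2)) := by
  have hinner : ∀ u w : EuclideanSpace ℝ (Fin n), ⟪u, w⟫ = ∑ i, u i * w i := by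
    intro u w
    simp [PiLp.inner_apply, RCLike.inner_apply]
    exact Finset.sum_congr rfl fun i _ => mul_comm _ _
  -- formula for Jstar
  have hJs : ∀ v : EuclideanSpace ℝ (Fin n),
      Jstar v = 1/2 + ∑ i, (1/2) * (a i)^2 * (v i)^2 := by
    intro v
    refine (hJstar v).unique (IsGreatest.isLUB ⟨⟨WithLp.toLp 2 (fun i => (a i)^2 * v i : Fin n → ℝ), ?_⟩, ?_⟩)
    · show ⟪v, _⟫ - J _ = _
      rw [hinner, hJ]
      show (∑ i, v i * ((a i)^2 * v i)) - (1/2) * ((∑ i, ((a i)^2 * v i)^2 / (a i)^2) - 1) = _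
      have e1 : ∑ i, v i * ((a i)^2 * v i) = ∑ i, (a i)^2 * (v i)^2 :=
        Finset.sum_congr rfl fun i _ => by ring
      have e2 : ∑ i : Fin n, ((a i)^2 * v i)^2 / (a i)^2 = ∑ i, (a i)^2 * (v i)^2 :=
        Finset.sum_congr rfl fun i _ => by
          have : (a i) ≠ 0 := (ha i).ne'
          field_simp
      have e3 : ∑ i : Fin n, (a i)^2 * (v i)^2
          = ∑ i, (1/2) * (a i)^2 * (v i)^2 + ∑ i, (1/2) * (a i)^2 * (v i)^2 := by
        rw [← Finset.sum_add_distrib]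
        exact Finset.sum_congr rfl fun i _ => by ring
      rw [e1, e2]
      linarith [e3]
    · rintro r ⟨y, rfl⟩
      show ⟪v, y⟫ - J y ≤ _
      rw [hinner, hJ]
      have hle : ∀ i ∈ Finset.univ,
          v i * y i - (1/2) * ((y i)^2 / (a i)^2) ≤ (1/2) * (a i)^2 * (v i)^2 := by
        intro i _
        have hai := ha i
        have hne : (a i) ≠ 0 := hai.ne'
        have key : (y i - (a i)^2 * v i)^2 ≥ 0 := sq_nonneg _
        have hd : (y i)^2 / (a i)^2 * (a i)^2 = (y i)^2 := by field_simp
        nlinarith [key, hd, mul_pos hai hai, sq_nonneg (a i)]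
      have hsum := Finset.sum_le_sum hle
      rw [Finset.sum_sub_distrib] at hsum
      have e4 : ∑ i : Fin n, (1/2) * ((y i)^2 / (a i)^2) = (1/2) * ∑ i, (y i)^2 / (a i)^2 := by
        rw [Finset.mul_sum]
      rw [e4] at hsum
      linarith
  -- rewrite the target value
  have hval : (-(-(1/2 : ℝ) + ∑ i ∈ Finset.univ.filter (fun i => t < |x i|),
          (1/2) * ((|x i| - t) / a i)^2))
      = 1/2 + ∑ i, (if t < |x i| then -((1/2) * ((|x i| - t)/(a i))^2) else 0) := by
    rw [Finset.sum_filter]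
    have e : ∑ i : Fin n, (if t < |x i| then -((1/2) * ((|x i| - t)/(a i))^2) else 0)
        = -∑ i : Fin n, (if t < |x i| then (1/2) * ((|x i| - t) / a i)^2 else 0) := by
      rw [← Finset.sum_neg_distrib]
      exact Finset.sum_congr rfl fun i _ => by split_ifs <;> simp
    rw [e]; ring
  have hobj : ∀ v : EuclideanSpace ℝ (Fin n),
      Jstar v + t * (∑ i, |v i|) - ⟪x, v⟫
        = 1/2 + ∑ i, ((1/2)*(a i)^2*(v i)^2 + t*|v i| - x i * v i) := by
    intro v
    rw [hJs, hinner, Finset.mul_sum, Finset.sum_sub_distrib, Finset.sum_add_distrib]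
    ring
  constructor
  · refine ⟨WithLp.toLp 2 (fun i => if t < |x i| then (if 0 ≤ x i then 1 else -1) * (|x i| - t) / (a i)^2
        else 0 : Fin n → ℝ), ?_⟩
    simp only [hobj, hval]
    congr 1
    exact Finset.sum_congr rfl fun i _ => percoord_eq (a i) t (x i) _ (ha i) ht rfl
  · rintro r ⟨v, rfl⟩
    simp only [hobj, hval]
    have := Finset.sum_le_sum fun i (_ : i ∈ Finset.univ) =>
      percoord_lb (a i) t (x i) (v i) (ha i) ht
    linarith
end

section
/- For x ∈ ℝⁿ and α > 0, the set of minimizers over v ∈ ℝⁿ of v ↦ (1/2)‖v - x‖₂² - α‖v‖₂ is: {x + α·x/‖x‖₂} if x ≠ 0, and {α·θ : ‖θ‖₂ = 1} if x = 0 (for n ≥ 1). -/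
/-- The set of minimizers of `v ↦ (1/2)‖v - x‖₂² - α‖v‖₂` is `{x + α·x/‖x‖}` if `x ≠ 0`
and `{αθ : ‖θ‖ = 1}` if `x = 0`. -/
theorem stretch2_minimizers (n : ℕ) (hn : 1 ≤ n)
    (x : EuclideanSpace ℝ (Fin n)) (α : ℝ) (hα : 0 < α)
    (F : EuclideanSpace ℝ (Fin n) → ℝ)
    (hF : ∀ v, F v = (1/2) * ‖v - x‖^2 - α * ‖v‖) :
    (x ≠ 0 → {v | ∀ u, F v ≤ F u} = {x + (α / ‖x‖) • x}) ∧
    (x = 0 → {v | ∀ u, F v ≤ F u} = {v | ∃ θ : EuclideanSpace ℝ (Fin n), ‖θ‖ = 1 ∧ v = α • θ}) := by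
  have hFexp : ∀ u, F u = (1/2) * ‖u‖^2 - inner ℝ u x + (1/2) * ‖x‖^2 - α * ‖u‖ := by
    intro u
    rw [hF]
    have h : ‖u - x‖^2 = ‖u‖^2 - 2 * inner ℝ u x + ‖x‖^2 := norm_sub_sq_real u x
    rw [h]; ring
  have hlb : ∀ u, -(α * ‖x‖) - (1/2) * α^2 ≤ F u := by
    intro u
    rw [hFexp]
    have h1 : (inner ℝ u x : ℝ) ≤ ‖u‖ * ‖x‖ := real_inner_le_norm u x
    nlinarith [sq_nonneg (‖u‖ - ‖x‖ - α), norm_nonneg u, norm_nonneg x]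
  constructor
  · intro hx
    have hxn : (0:ℝ) < ‖x‖ := norm_pos_iff.mpr hx
    set v₀ := x + (α / ‖x‖) • x with hv₀
    have hv₀eq : v₀ = ((‖x‖ + α)/‖x‖) • x := by
      rw [hv₀, add_div, div_self hxn.ne', add_smul, one_smul]
    have hnv₀ : ‖v₀‖ = ‖x‖ + α := by
      rw [hv₀eq, norm_smul, Real.norm_eq_abs, abs_of_pos (by positivity)]
      field_simp
    have hFv₀ : F v₀ = -(α * ‖x‖) - (1/2) * α^2 := by
      rw [hF, hnv₀]
      have h : v₀ - x = (α / ‖x‖) • x := by rw [hv₀]; abel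
      rw [h, norm_smul, Real.norm_eq_abs, abs_of_pos (by positivity),
        div_mul_cancel₀ _ hxn.ne']
      ring
    ext v
    simp only [Set.mem_setOf_eq, Set.mem_singleton_iff]
    constructor
    · intro hv
      have h1 := hv v₀
      rw [hFv₀, hFexp] at h1
      have h2 : (inner ℝ v x : ℝ) ≤ ‖v‖ * ‖x‖ := real_inner_le_norm v x
      have hnv : ‖v‖ = ‖x‖ + α := by nlinarith [sq_nonneg (‖v‖ - ‖x‖ - α)]
      have hinner : (inner ℝ v x : ℝ) = ‖v‖ * ‖x‖ := by
        nlinarith [sq_nonneg (‖v‖ - ‖x‖ - α)]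
      have hsm : ‖x‖ • v = ‖v‖ • x := inner_eq_norm_mul_iff_real.mp hinner
      have hveq : v = ((‖x‖ + α)/‖x‖) • x := by
        have h3 : v = ‖x‖⁻¹ • (‖v‖ • x) := by rw [← hsm, inv_smul_smul₀ hxn.ne']
        rw [h3, smul_smul, hnv]
        congr 1
        field_simp
      rw [hveq, ← hv₀eq]
    · intro hv
      subst hv
      intro u
      rw [hFv₀]
      exact hlb u
  · intro hx
    subst hx
    have hF0 : ∀ u, F u = (1/2) * ‖u‖^2 - α * ‖u‖ := by
      intro u
      rw [hFexp u]
      simp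
    have hlb0 : ∀ u, -((1/2) * α^2) ≤ F u := by
      intro u
      rw [hF0]
      nlinarith [sq_nonneg (‖u‖ - α)]
    have hval : ∀ w : EuclideanSpace ℝ (Fin n), ‖w‖ = α → F w = -((1/2) * α^2) := by
      intro w hw
      rw [hF0, hw]; ring
    ext v
    simp only [Set.mem_setOf_eq]
    constructor
    · intro hv
      have i0 : Fin n := ⟨0, hn⟩
      set θ₀ : EuclideanSpace ℝ (Fin n) := EuclideanSpace.single i0 (1:ℝ) with hθ₀
      have hθ₀n : ‖θ₀‖ = 1 := by simp [hθ₀, EuclideanSpace.norm_single]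
      have hαθ : ‖α • θ₀‖ = α := by
        rw [norm_smul, hθ₀n, Real.norm_eq_abs, abs_of_pos hα, mul_one]
      have h1 := hv (α • θ₀)
      rw [hval _ hαθ, hF0] at h1
      have hnv : ‖v‖ = α := by nlinarith [sq_nonneg (‖v‖ - α)]
      refine ⟨α⁻¹ • v, ?_, ?_⟩
      · rw [norm_smul, hnv, Real.norm_eq_abs, abs_of_pos (by positivity)]
        field_simp
      · rw [smul_smul, mul_inv_cancel₀ hα.ne', one_smul]
    · rintro ⟨θ, hθ, rfl⟩
      intro u
      have : ‖α • θ‖ = α := by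
        rw [norm_smul, hθ, Real.norm_eq_abs, abs_of_pos hα, mul_one]
      rw [hval _ this]
      exact hlb0 u
end

section
/- For x ∈ ℝⁿ and α > 0, there exists β̄ ≥ 0 satisfying β̄ = α‖shrink₁(x, β̄)‖₁, and for any such β̄, shrink₁(x, β̄) is a minimizer over v ∈ ℝⁿ of v ↦ (1/2)‖v - x‖₂² + (α/2)‖v‖₁². -/
open RealInnerProductSpace

lemma shrink_key (t β : ℝ) (hβ : 0 ≤ β) :
    |Real.sign t * max (|t| - β) 0 - t| ≤ β ∧
    (Real.sign t * max (|t| - β) 0 - t) * (Real.sign t * max (|t| - β) 0)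
      = -β * |Real.sign t * max (|t| - β) 0| := by
  rcases lt_trichotomy t 0 with h | h | h
  · rw [Real.sign_of_neg h, abs_of_neg h]
    rcases le_or_gt β (-t) with hb | hb
    · rw [max_eq_left (by linarith)]
      constructor
      · rw [show (-1 : ℝ) * (-t - β) - t = β by ring, abs_of_nonneg hβ]
      · rw [show (-1 : ℝ) * (-t - β) = t + β by ring,
          abs_of_nonpos (by linarith : t + β ≤ 0)]
        ring
    · rw [max_eq_right (by linarith)]
      constructor
      · rw [show (-1 : ℝ) * 0 - t = -t by ring, abs_of_nonneg (by linarith : (0:ℝ) ≤ -t)]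
        linarith
      · simp
  · subst h
    constructor
    · simpa using hβ
    · simp
  · rw [Real.sign_of_pos h, abs_of_pos h]
    rcases le_or_gt β t with hb | hb
    · rw [max_eq_left (by linarith)]
      constructor
      · rw [show (1 : ℝ) * (t - β) - t = -β by ring, abs_neg, abs_of_nonneg hβ]
      · rw [show (1 : ℝ) * (t - β) = t - β by ring,
          abs_of_nonneg (by linarith : (0:ℝ) ≤ t - β)]
        ring
    · rw [max_eq_right (by linarith)]
      constructor
      · rw [show (1 : ℝ) * 0 - t = -t by ring, abs_neg, abs_of_pos h]
        linarith
      · simp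

lemma abs_shrink (t β : ℝ) (hβ : 0 ≤ β) :
    |Real.sign t * max (|t| - β) 0| = max (|t| - β) 0 := by
  rcases lt_trichotomy t 0 with h | h | h
  · rw [Real.sign_of_neg h, abs_mul]
    norm_num [abs_of_nonneg (le_max_right (|t| - β) 0)]
  · subst h
    have h0 : |(0:ℝ)| - β ≤ 0 := by rw [abs_zero]; linarith
    simp [Real.sign_zero, max_eq_right h0, hβ]
  · rw [Real.sign_of_pos h, abs_mul]
    norm_num [abs_of_nonneg (le_max_right (|t| - β) 0)]

open Finset in
/-- There exists `β̄ ≥ 0` with `β̄ = α‖shrink₁(x,β̄)‖₁`, and for any such `β̄`,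
`shrink₁(x,β̄)` minimizes `v ↦ (1/2)‖v - x‖₂² + (α/2)‖v‖₁²`. -/
theorem prox_half_l1_squared (n : ℕ)
    (x : EuclideanSpace ℝ (Fin n)) (α : ℝ) (hα : 0 < α)
    (shrink : ℝ → EuclideanSpace ℝ (Fin n))
    (hshrink : ∀ β i, shrink β i = Real.sign (x i) * max (|x i| - β) 0)
    (F : EuclideanSpace ℝ (Fin n) → ℝ)
    (hF : ∀ v, F v = (1/2) * ‖v - x‖^2 + (α/2) * (∑ i, |v i|)^2) :
    (∃ β : ℝ, 0 ≤ β ∧ β = α * ∑ i, |shrink β i|) ∧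
    (∀ β : ℝ, 0 ≤ β → β = α * ∑ i, |shrink β i| → ∀ v, F (shrink β) ≤ F v) := by
  constructor
  · -- existence via IVT
    set g : ℝ → ℝ := fun β => β - α * ∑ i, max (|x i| - β) 0 with hg
    set B : ℝ := α * ∑ i, |x i| with hB
    have hBnn : 0 ≤ B := by
      apply mul_nonneg hα.le
      exact Finset.sum_nonneg fun i _ => abs_nonneg _
    have hcont : Continuous g := by
      apply Continuous.sub continuous_id
      apply Continuous.mul continuous_const
      apply continuous_finset_sum
      intro i _
      exact (continuous_const.sub continuous_id).max continuous_const
    have hg0 : g 0 ≤ 0 := by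
      have : ∑ i, max (|x i| - 0) 0 = ∑ i, |x i| := by
        apply Finset.sum_congr rfl
        intro i _
        simp [max_eq_left (abs_nonneg (x i))]
      simp only [hg, this]
      linarith [hBnn, hB]
    have hgB : 0 ≤ g B := by
      have hle : ∑ i, max (|x i| - B) 0 ≤ ∑ i, |x i| := by
        apply Finset.sum_le_sum
        intro i _
        exact max_le (by linarith [abs_nonneg (x i)]) (abs_nonneg _)
      have : α * ∑ i, max (|x i| - B) 0 ≤ B := by
        rw [hB]
        exact mul_le_mul_of_nonneg_left hle hα.le
      simp only [hg]
      linarith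
    have h0B : (0 : ℝ) ≤ B := hBnn
    have hmem : (0 : ℝ) ∈ Set.Icc (g 0) (g B) := ⟨hg0, hgB⟩
    obtain ⟨β, hβmem, hβ⟩ := intermediate_value_Icc h0B hcont.continuousOn hmem
    refine ⟨β, hβmem.1, ?_⟩
    have heq : β = α * ∑ i, max (|x i| - β) 0 := by
      have := hβ
      simp only [hg] at this
      linarith
    have hsum : ∑ i, |shrink β i| = ∑ i, max (|x i| - β) 0 := by
      apply Finset.sum_congr rfl
      intro i _
      rw [hshrink, abs_shrink _ _ hβmem.1]
    rw [hsum]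
    exact heq
  · -- optimality
    intro β hβ hfix v
    set u : EuclideanSpace ℝ (Fin n) := shrink β with hu
    have hcomp : ∀ i, |u i - x i| ≤ β ∧ (u i - x i) * u i = -β * |u i| := by
      intro i
      rw [hu, hshrink]
      exact shrink_key (x i) β hβ
    set Su : ℝ := ∑ i, |u i| with hSu
    set Sv : ℝ := ∑ i, |v i| with hSv
    have key2 : 0 ≤ ∑ i, ((v i - u i) * (u i - x i) + β * (|v i| - |u i|)) := by
      apply Finset.sum_nonneg
      intro i _
      obtain ⟨h1, h2⟩ := hcomp i
      have h3 : -(|u i - x i| * |v i|) ≤ (u i - x i) * v i := by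
        rw [← abs_mul]; exact neg_abs_le _
      have h4 : 0 ≤ |v i| := abs_nonneg _
      nlinarith
    have hinner : ⟪v - u, u - x⟫ = ∑ i, (v i - u i) * (u i - x i) := by
      rw [PiLp.inner_apply]
      apply Finset.sum_congr rfl
      intro i _
      simp [RCLike.inner_apply]
      ring
    have hnorm : ‖v - x‖^2 = ‖v - u‖^2 + 2 * ⟪v - u, u - x⟫ + ‖u - x‖^2 := by
      have hvx : v - x = (v - u) + (u - x) := by abel
      rw [hvx, norm_add_sq_real]
    have expand : ∑ i, ((v i - u i) * (u i - x i) + β * (|v i| - |u i|))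
        = (∑ i, (v i - u i) * (u i - x i)) + β * Sv - β * Su := by
      rw [Finset.sum_add_distrib, ← Finset.mul_sum, Finset.sum_sub_distrib]
      ring
    have hn2 : 0 ≤ ‖v - u‖^2 := sq_nonneg _
    rw [hF, hF, ← hSu, ← hSv]
    have hq : (α/2)*Sv^2 - (α/2)*Su^2 = β*(Sv - Su) + (α/2)*(Sv - Su)^2 := by
      rw [hfix]; ring
    have hkey := key2
    rw [expand] at hkey
    have hsq : 0 ≤ (α/2)*(Sv - Su)^2 := mul_nonneg (by linarith) (sq_nonneg _)
    linarith [hnorm, hinner, hn2, hkey, hq, hsq]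
end

section
/- Projection onto the ℓ¹ ball: let α > 0, C = {w ∈ ℝⁿ : ‖w‖₁ ≤ α}, and z ∉ C. Then there exists μ̄ > 0 with ‖shrink₁(z, μ̄)‖₁ = α, and the Euclidean projection of z onto C equals shrink₁(z, μ̄). -/
private lemma sign_mul_abs_eq (x : ℝ) : Real.sign x * |x| = x := by
  rcases lt_trichotomy x 0 with h | h | h
  · rw [Real.sign_of_neg h, abs_of_neg h]; ring
  · simp [h]
  · rw [Real.sign_of_pos h, abs_of_pos h]; ring


open Finset in
/-- Projection onto the ℓ¹ ball: for `z ∉ C = {w : ‖w‖₁ ≤ α}`, there exists `μ̄ > 0` with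
`‖shrink₁(z,μ̄)‖₁ = α`, and the Euclidean projection of `z` onto `C` is `shrink₁(z,μ̄)`. -/
theorem projection_onto_l1_ball (n : ℕ) (α : ℝ) (hα : 0 < α)
    (C : Set (EuclideanSpace ℝ (Fin n)))
    (hC : C = {w : EuclideanSpace ℝ (Fin n) | ∑ i, |w i| ≤ α})
    (z : EuclideanSpace ℝ (Fin n)) (hz : z ∉ C)
    (shrink : ℝ → EuclideanSpace ℝ (Fin n))
    (hshrink : ∀ μ i, shrink μ i = Real.sign (z i) * max (|z i| - μ) 0) :
    ∃ μ : ℝ, 0 < μ ∧ (∑ i, |shrink μ i|) = α ∧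
      ∀ p ∈ C, (∀ y ∈ C, ‖p - z‖ ≤ ‖y - z‖) → p = shrink μ := by
  subst hC
  simp only [Set.mem_setOf_eq, not_le] at hz
  set f : ℝ → ℝ := fun μ => ∑ i, max (|z i| - μ) 0 with hf
  have hcont : Continuous f := by
    apply continuous_finset_sum; intro i _
    exact (continuous_const.sub continuous_id).max continuous_const
  have hf0 : f 0 = ∑ i, |z i| := by
    simp only [hf, sub_zero]
    exact Finset.sum_congr rfl fun i _ => max_eq_left (abs_nonneg _)
  have hT : (0:ℝ) ≤ ∑ i, |z i| := Finset.sum_nonneg fun i _ => abs_nonneg _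
  have hftop : f (∑ i, |z i|) = 0 := by
    apply Finset.sum_eq_zero; intro i _
    have : |z i| ≤ ∑ j, |z j| :=
      Finset.single_le_sum (fun j _ => abs_nonneg (z j)) (Finset.mem_univ i)
    exact max_eq_right (by linarith)
  have hmem : α ∈ Set.Icc (f (∑ i, |z i|)) (f 0) := by
    rw [hftop, hf0]; exact ⟨le_of_lt hα, le_of_lt hz⟩
  obtain ⟨μ, hμI, hμeq⟩ :=
    intermediate_value_Icc' hT hcont.continuousOn hmem
  have hμpos : 0 < μ := by
    rcases lt_or_eq_of_le hμI.1 with h | h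
    · exact h
    · exfalso; rw [← h] at hμeq; rw [hf0] at hμeq; linarith
  -- absolute value of shrink
  have habs : ∀ i, |shrink μ i| = max (|z i| - μ) 0 := by
    intro i
    rw [hshrink]
    rcases lt_trichotomy (z i) 0 with h | h | h
    · rw [Real.sign_of_neg h, abs_mul, abs_neg, abs_one, one_mul,
        abs_of_nonneg (le_max_right _ _)]
    · rw [h, Real.sign_zero, zero_mul, abs_zero]
      have : (0:ℝ) - μ ≤ 0 := by linarith
      exact (max_eq_right this).symm
    · rw [Real.sign_of_pos h, abs_mul, abs_one, one_mul,
        abs_of_nonneg (le_max_right _ _)]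
  have hsum : (∑ i, |shrink μ i|) = α := by
    rw [Finset.sum_congr rfl fun i _ => habs i]; exact hμeq
  refine ⟨μ, hμpos, hsum, ?_⟩
  -- key coordinate facts
  set s := shrink μ with hs
  have key1 : ∀ i, |z i - s i| ≤ μ := by
    intro i
    rcases le_or_gt (|z i|) μ with h | h
    · have hmax : max (|z i| - μ) 0 = 0 := max_eq_right (by linarith)
      rw [hs, hshrink, hmax, mul_zero, sub_zero]; exact h
    · have hne : z i ≠ 0 := by
        intro h0; rw [h0, abs_zero] at h; linarith
      have hmax : max (|z i| - μ) 0 = |z i| - μ := max_eq_left (by linarith)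
      have hsm : Real.sign (z i) * |z i| = z i := sign_mul_abs_eq (z i)
      have : z i - s i = Real.sign (z i) * μ := by
        rw [hs, hshrink, hmax]; linear_combination -hsm
      rw [this]
      rcases lt_trichotomy (z i) 0 with h' | h' | h'
      · rw [Real.sign_of_neg h', abs_mul, abs_neg, abs_one, one_mul,
          abs_of_pos hμpos]
      · exact absurd h' hne
      · rw [Real.sign_of_pos h', abs_mul, abs_one, one_mul, abs_of_pos hμpos]
  have key2 : ∀ i, (z i - s i) * s i = μ * |s i| := by
    intro i
    rcases le_or_gt (|z i|) μ with h | h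
    · have hmax : max (|z i| - μ) 0 = 0 := max_eq_right (by linarith)
      have : s i = 0 := by rw [hs, hshrink, hmax, mul_zero]
      rw [this]; simp
    · have hne : z i ≠ 0 := by
        intro h0; rw [h0, abs_zero] at h; linarith
      have hmax : max (|z i| - μ) 0 = |z i| - μ := max_eq_left (by linarith)
      have hsm : Real.sign (z i) * |z i| = z i := sign_mul_abs_eq (z i)
      have hsq : Real.sign (z i) * Real.sign (z i) = 1 := by
        rcases lt_trichotomy (z i) 0 with h' | h' | h'
        · rw [Real.sign_of_neg h']; ring
        · exact absurd h' hne
        · rw [Real.sign_of_pos h']; ring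
      have hzsi : z i - s i = Real.sign (z i) * μ := by
        rw [hs, hshrink, hmax]; linear_combination -hsm
      have habsi : |s i| = |z i| - μ := by rw [hs, habs i, hmax]
      rw [hzsi, habsi, hs, hshrink, hmax]; linear_combination μ * (|z i| - μ) * hsq
  -- s ∈ C
  have hsC : s ∈ {w : EuclideanSpace ℝ (Fin n) | ∑ i, |w i| ≤ α} := by
    simp only [Set.mem_setOf_eq]; rw [hsum]
  -- variational inequality
  have hVI : ∀ y ∈ {w : EuclideanSpace ℝ (Fin n) | ∑ i, |w i| ≤ α},
      (inner ℝ (z - s) (y - s) : ℝ) ≤ 0 := by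
    intro y hy
    simp only [Set.mem_setOf_eq] at hy
    have hinner : (inner ℝ (z - s) (y - s) : ℝ)
        = ∑ i, (z i - s i) * (y i - s i) := by
      rw [PiLp.inner_apply]
      apply Finset.sum_congr rfl
      intro i _
      simp [PiLp.sub_apply, RCLike.inner_apply, mul_comm]
    rw [hinner]
    have h1 : ∑ i, (z i - s i) * y i ≤ μ * α := by
      calc ∑ i, (z i - s i) * y i ≤ ∑ i, μ * |y i| := by
            apply Finset.sum_le_sum; intro i _
            calc (z i - s i) * y i ≤ |(z i - s i) * y i| := le_abs_self _
              _ = |z i - s i| * |y i| := abs_mul _ _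
              _ ≤ μ * |y i| := mul_le_mul_of_nonneg_right (key1 i) (abs_nonneg _)
        _ = μ * ∑ i, |y i| := by rw [Finset.mul_sum]
        _ ≤ μ * α := mul_le_mul_of_nonneg_left hy (le_of_lt hμpos)
    have h2 : ∑ i, (z i - s i) * s i = μ * α := by
      rw [Finset.sum_congr rfl fun i _ => key2 i, ← Finset.mul_sum, hsum]
    have hsplit : ∑ i, (z i - s i) * (y i - s i)
        = (∑ i, (z i - s i) * y i) - ∑ i, (z i - s i) * s i := by
      rw [← Finset.sum_sub_distrib]
      apply Finset.sum_congr rfl; intro i _; ring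
    rw [hsplit, h2]; linarith
  -- conclude
  intro p hp hmin
  have hple : ‖p - z‖ ≤ ‖s - z‖ := hmin s hsC
  have hVIp : (inner ℝ (z - s) (p - s) : ℝ) ≤ 0 := hVI p hp
  have hexp : ‖p - z‖ ^ 2 = ‖p - s‖ ^ 2 + 2 * (inner ℝ (p - s) (s - z) : ℝ)
      + ‖s - z‖ ^ 2 := by
    have : p - z = (p - s) + (s - z) := by abel
    rw [this, norm_add_sq_real]
  have hinn : (inner ℝ (p - s) (s - z) : ℝ) = -(inner ℝ (z - s) (p - s) : ℝ) := by
    rw [real_inner_comm]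
    have : p - s = -(s - p) := by abel
    have h2 : s - z = -(z - s) := by abel
    rw [h2, inner_neg_left]
  have hsq : ‖p - z‖ ^ 2 ≤ ‖s - z‖ ^ 2 := by
    apply pow_le_pow_left₀ (norm_nonneg _) hple
  have hps : ‖p - s‖ ^ 2 ≤ 0 := by
    rw [hexp, hinn] at hsq; nlinarith
  have : ‖p - s‖ = 0 := by
    have := sq_nonneg ‖p - s‖
    have h0 : ‖p - s‖ ^ 2 = 0 := le_antisymm hps this
    exact pow_eq_zero_iff (by norm_num) |>.mp h0
  have := norm_eq_zero.mp this
  have := sub_eq_zero.mp this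
  rw [this]
end
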